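/- Let m, n, d, w be positive integers with w ≤ n, and set b = d - m·w·(n-w)/n. If b > 0, then every multiply constant-weight code MCWC(m,n,2d,w) has size at most d/b, i.e., M(m,n,2d,w) ≤ ⌊d/b⌋. -/

import Mathlib

open Finset

/-- Plotkin/Johnson-type bound for multiply constant-weight codes: with
`b = d - m·w·(n-w)/n > 0`, every `MCWC(m,n,2d,w)` has size at most `d/b`. -/
theorem mcwc_plotkin_bound (m n d w : ℕ) (hm : 0 < m) (hn : 0 < n) (hd : 0 < d)
    (hw : 0 < w) (hwn : w ≤ n)
    (b : ℝ) (hb : b = (d : ℝ) - (m : ℝ) * w * ((n : ℝ) - w) / n) (hbpos : 0 < b)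
    (C : Finset (Fin m × Fin n → Bool))
    (hweight : ∀ c ∈ C, ∀ j : Fin m,
      (univ.filter (fun i : Fin n => c (j, i) = true)).card = w)
    (hdist : ∀ u ∈ C, ∀ v ∈ C, u ≠ v → 2 * d ≤ hammingDist u v) :
    (C.card : ℝ) ≤ (d : ℝ) / b := by
  classical
  rcases C.eq_empty_or_nonempty with hC | hC
  · simp [hC]; positivity
  set M : ℝ := (C.card : ℝ) with hM
  have hM1 : 1 ≤ M := by
    exact Nat.one_le_cast.mpr (Finset.card_pos.mpr hC)
  have hnR : (0:ℝ) < n := by exact_mod_cast hn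
  rw [le_div_iff₀ hbpos]
  -- indicator function
  set g : (Fin m × Fin n → Bool) → (Fin m × Fin n) → ℝ :=
    fun c x => if c x = true then 1 else 0 with hg
  set f : Fin m × Fin n → ℝ := fun x => ∑ c ∈ C, g c x with hf
  -- Hamming distance as a sum
  have hham : ∀ u v : Fin m × Fin n → Bool, (hammingDist u v : ℝ) =
      ∑ x : Fin m × Fin n, (g u x + g v x - 2 * g u x * g v x) := by
    intro u v
    have : (hammingDist u v : ℝ) = ∑ x : Fin m × Fin n, if u x ≠ v x then (1:ℝ) else 0 := by
      rw [hammingDist, Finset.sum_boole]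
    rw [this]
    refine Finset.sum_congr rfl fun x _ => ?_
    simp only [hg]
    cases hux : u x <;> cases hvx : v x <;> simp [hux, hvx] <;> norm_num
  set S : ℝ := ∑ u ∈ C, ∑ v ∈ C, (hammingDist u v : ℝ) with hS
  -- lower bound on S
  have hlow : 2 * d * (M * (M - 1)) ≤ S := by
    have : ∀ u ∈ C, (2 * d * (M - 1) : ℝ) ≤ ∑ v ∈ C, (hammingDist u v : ℝ) := by
      intro u hu
      have : ∑ v ∈ C, (if v = u then (0:ℝ) else 2 * d) ≤ ∑ v ∈ C, (hammingDist u v : ℝ) := by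
        refine Finset.sum_le_sum fun v hv => ?_
        by_cases hvu : v = u
        · simp [hvu]
        · simp only [if_neg hvu]
          have := hdist u hu v hv (Ne.symm hvu)
          exact_mod_cast this
      calc (2 * d * (M - 1) : ℝ) = ∑ v ∈ C, (if v = u then (0:ℝ) else 2 * d) := by
            have he : ∀ v ∈ C, (if v = u then (0:ℝ) else 2 * d)
                = (2 * d : ℝ) - (if v = u then (2*d:ℝ) else 0) := by
              intro v _; split <;> ring
            rw [Finset.sum_congr rfl he, Finset.sum_sub_distrib,
              Finset.sum_ite_eq' C u (fun _ => (2*d:ℝ))]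
            simp [hu, Finset.sum_const, hM]
            ring
        _ ≤ _ := this
    calc (2 * d * (M * (M - 1)) : ℝ) = ∑ _u ∈ C, (2 * d * (M - 1) : ℝ) := by
          simp [Finset.sum_const, hM]; ring
      _ ≤ S := Finset.sum_le_sum this
  -- rewrite S as a coordinate sum
  have hSeq : S = ∑ x : Fin m × Fin n, (2 * M * f x - 2 * (f x)^2) := by
    rw [hS]
    have : ∀ u ∈ C, ∑ v ∈ C, (hammingDist u v : ℝ)
        = ∑ x : Fin m × Fin n, ∑ v ∈ C, (g u x + g v x - 2 * g u x * g v x) := by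
      intro u _
      rw [← Finset.sum_comm]
      exact Finset.sum_congr rfl fun v _ => hham u v
    rw [Finset.sum_congr rfl this, Finset.sum_comm]
    refine Finset.sum_congr rfl fun x _ => ?_
    have h1 : ∑ u ∈ C, ∑ v ∈ C, (g u x + g v x - 2 * g u x * g v x)
        = ∑ u ∈ C, (M * g u x + f x - 2 * g u x * f x) := by
      refine Finset.sum_congr rfl fun u _ => ?_
      rw [Finset.sum_sub_distrib, Finset.sum_add_distrib]
      simp only [Finset.sum_const, ← Finset.mul_sum, hM, ← hf]
      ring_nf
      rfl
    rw [h1, Finset.sum_sub_distrib, Finset.sum_add_distrib]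
    simp only [Finset.sum_const, ← Finset.mul_sum, ← Finset.sum_mul, hM, ← hf]
    ring
  -- block column sums
  have hcol : ∀ j : Fin m, ∑ i : Fin n, f (j, i) = M * w := by
    intro j
    rw [hf]
    simp only
    rw [Finset.sum_comm]
    have : ∀ c ∈ C, ∑ i : Fin n, g c (j, i) = (w : ℝ) := by
      intro c hc
      have : ∑ i : Fin n, g c (j, i) =
          ((univ.filter (fun i : Fin n => c (j, i) = true)).card : ℝ) := by
        rw [hg]; simp [Finset.sum_boole]
      rw [this, hweight c hc j]
    rw [Finset.sum_congr rfl this]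
    simp [Finset.sum_const, hM]
  -- per-block upper bound
  have hblock : ∀ j : Fin m,
      ∑ i : Fin n, (2 * M * f (j, i) - 2 * (f (j, i))^2)
        ≤ 2 * M^2 * w * ((n:ℝ) - w) / n := by
    intro j
    have hcs : (M * w)^2 ≤ (n:ℝ) * ∑ i : Fin n, (f (j, i))^2 := by
      have := sq_sum_le_card_mul_sum_sq (s := (univ : Finset (Fin n)))
        (f := fun i => f (j, i))
      rw [hcol j] at this
      simpa using this
    have h2 : ∑ i : Fin n, 2 * (f (j, i))^2 = 2 * ∑ i : Fin n, (f (j, i))^2 :=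
      (Finset.mul_sum _ _ _).symm
    rw [Finset.sum_sub_distrib, ← Finset.mul_sum, hcol j, h2, le_div_iff₀ hnR]
    nlinarith [hcs]
  have hup : S ≤ 2 * M^2 * ((m:ℝ) * w * ((n:ℝ) - w) / n) := by
    rw [hSeq, Fintype.sum_prod_type]
    calc ∑ j : Fin m, ∑ i : Fin n, (2 * M * f (j, i) - 2 * (f (j, i))^2)
        ≤ ∑ _j : Fin m, (2 * M^2 * w * ((n:ℝ) - w) / n) :=
          Finset.sum_le_sum fun j _ => hblock j
      _ = (m:ℝ) * (2 * M^2 * w * ((n:ℝ) - w) / n) := by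
          simp [Finset.sum_const]
      _ = 2 * M^2 * ((m:ℝ) * w * ((n:ℝ) - w) / n) := by ring
  -- combine
  have hmb : (m:ℝ) * w * ((n:ℝ) - w) / n = (d:ℝ) - b := by rw [hb]; ring
  rw [hmb] at hup
  nlinarith [hlow.trans hup, hM1, hbpos]
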